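/- Let m ≥ 1 and C > 0, let P⊥ = I_m − (1/m)·𝟙𝟙ᵀ be the mean-centering projection on ℝ^m, and define LN_C : ℝ^m → ℝ^m by LN_C(x) = P⊥x / max{‖P⊥x‖₂, C}. Then for all x, y ∈ ℝ^m, ‖LN_C(x) − LN_C(y)‖₂ ≤ (2/C)·‖x − y‖₂. -/

import Mathlib

/-- The mean-centering projection `P⊥ = I − (1/m)·𝟙𝟙ᵀ` on `ℝ^m`. -/
noncomputable def meanCenter (m : ℕ) (x : EuclideanSpace ℝ (Fin m)) :
    EuclideanSpace ℝ (Fin m) :=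
  WithLp.toLp 2 (fun i => x i - (∑ j : Fin m, x j) / m)

/-- The LayerNorm map `LN_C(x) = P⊥x / max{‖P⊥x‖₂, C}`. -/
noncomputable def layerNorm (m : ℕ) (C : ℝ) (x : EuclideanSpace ℝ (Fin m)) :
    EuclideanSpace ℝ (Fin m) :=
  (1 / max ‖meanCenter m x‖ C) • meanCenter m x

lemma meanCenter_sub (m : ℕ) (x y : EuclideanSpace ℝ (Fin m)) :
    meanCenter m (x - y) = meanCenter m x - meanCenter m y := by
  ext i
  simp only [meanCenter, PiLp.sub_apply, PiLp.toLp_apply, Finset.sum_sub_distrib]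
  ring

lemma meanCenter_norm_le (m : ℕ) (hm : 1 ≤ m) (z : EuclideanSpace ℝ (Fin m)) :
    ‖meanCenter m z‖ ≤ ‖z‖ := by
  have hm0 : (0:ℝ) < m := by exact_mod_cast hm
  rw [EuclideanSpace.norm_eq, EuclideanSpace.norm_eq]
  apply Real.sqrt_le_sqrt
  set μ : ℝ := (∑ j : Fin m, z j) / m with hμ
  have hsum : ∑ j : Fin m, z j = m * μ := by
    rw [hμ]; field_simp
  have : ∑ i : Fin m, ‖meanCenter m z i‖ ^ 2
      = (∑ i : Fin m, ‖z i‖ ^ 2) - m * μ ^ 2 := by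
    simp only [meanCenter, PiLp.toLp_apply, Real.norm_eq_abs, sq_abs]
    have : ∑ i : Fin m, (z i - μ) ^ 2
        = (∑ i : Fin m, (z i)^2) - 2 * μ * (∑ i : Fin m, z i) + m * μ ^ 2 := by
      have h : ∀ i : Fin m, (z i - μ) ^ 2 = (z i)^2 - 2 * μ * z i + μ ^ 2 :=
        fun i => by ring
      simp only [h, Finset.sum_add_distrib, Finset.sum_sub_distrib, ← Finset.mul_sum,
        Finset.sum_const, Finset.card_univ, Fintype.card_fin, nsmul_eq_mul]
    rw [this, hsum]; ring
  rw [this]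
  nlinarith [sq_nonneg μ]

/-- LayerNorm with positive normalizing constant `C` is `(2/C)`-Lipschitz. -/
theorem layerNorm_lipschitz (m : ℕ) (hm : 1 ≤ m) (C : ℝ) (hC : 0 < C)
    (x y : EuclideanSpace ℝ (Fin m)) :
    ‖layerNorm m C x - layerNorm m C y‖ ≤ 2 / C * ‖x - y‖ := by
  set u := meanCenter m x with hu
  set v := meanCenter m y with hv
  set a := max ‖u‖ C with ha
  set b := max ‖v‖ C with hb
  have haC : C ≤ a := le_max_right _ _
  have hbC : C ≤ b := le_max_right _ _
  have ha0 : 0 < a := lt_of_lt_of_le hC haC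
  have hb0 : 0 < b := lt_of_lt_of_le hC hbC
  have hua : ‖u‖ ≤ a := le_max_left _ _
  have hvb : ‖v‖ ≤ b := le_max_left _ _
  have huv : ‖u - v‖ ≤ ‖x - y‖ := by
    rw [hu, hv, ← meanCenter_sub]
    exact meanCenter_norm_le m hm _
  have hab : |a - b| ≤ ‖u - v‖ := by
    calc |a - b| ≤ |‖u‖ - ‖v‖| := abs_max_sub_max_le_abs _ _ _
    _ ≤ ‖u - v‖ := abs_norm_sub_norm_le u v
  have hdecomp : layerNorm m C x - layerNorm m C y
      = (1 / a) • (u - v) + ((1 / a) - (1 / b)) • v := by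
    simp only [layerNorm, ← hu, ← hv, ← ha, ← hb, smul_sub, sub_smul]
    abel
  have h1 : ‖(1 / a) • (u - v)‖ ≤ ‖u - v‖ / a := by
    rw [norm_smul, Real.norm_eq_abs, abs_of_pos (by positivity)]
    apply le_of_eq
    field_simp
  have h2 : ‖((1 / a) - (1 / b)) • v‖ ≤ ‖u - v‖ / a := by
    rw [norm_smul, Real.norm_eq_abs]
    have : |1 / a - 1 / b| = |b - a| / (a * b) := by
      rw [div_sub_div _ _ (ne_of_gt ha0) (ne_of_gt hb0), abs_div,
        abs_of_pos (by positivity : (0:ℝ) < a * b)]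
      ring_nf
    rw [this]
    calc |b - a| / (a * b) * ‖v‖ ≤ |b - a| / (a * b) * b := by
          apply mul_le_mul_of_nonneg_left hvb (by positivity)
      _ = |b - a| / a := by field_simp
      _ ≤ ‖u - v‖ / a := by
          gcongr
          rw [abs_sub_comm]; exact hab
  calc ‖layerNorm m C x - layerNorm m C y‖
      ≤ ‖(1 / a) • (u - v)‖ + ‖((1 / a) - (1 / b)) • v‖ := by
        rw [hdecomp]; exact norm_add_le _ _
    _ ≤ ‖u - v‖ / a + ‖u - v‖ / a := add_le_add h1 h2
    _ = 2 * (‖u - v‖ / a) := by ring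
    _ ≤ 2 * (‖x - y‖ / C) := by
        apply mul_le_mul_of_nonneg_left ?_ (by norm_num)
        exact div_le_div₀ (norm_nonneg _) huv hC haC
    _ = 2 / C * ‖x - y‖ := by ring
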